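/- (Weighted distance bound, Lemma 35 of [Bresh]) Let μ(ρ) = ρ^{(s+3)/2} with γ ≥ s+2 and s ≥ -1, γ > 1, and h(ρ) = ρ^γ/(γ-1). For every compact set K ⊂ (0, ∞) there is a constant C > 0 such that for all ρ̄ ∈ K and all ρ ≥ 0, ρ |μ'(ρ) - μ'(ρ̄)|² ≤ C h(ρ|ρ̄), where h(ρ|ρ̄) = h(ρ) - h(ρ̄) - h'(ρ̄)(ρ - ρ̄). -/

import Mathlib

set_option maxHeartbeats 1000000

open Set

lemma monoOn_of_hasDerivAt {f f' : ℝ → ℝ} {a b : ℝ}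
    (hf : ∀ x ∈ Set.Icc a b, HasDerivAt f (f' x) x)
    (h0 : ∀ x ∈ Set.Ioo a b, 0 ≤ f' x) : MonotoneOn f (Set.Icc a b) := by
  apply monotoneOn_of_deriv_nonneg (convex_Icc a b)
  · exact fun x hx => (hf x hx).continuousAt.continuousWithinAt
  · intro x hx
    rw [interior_Icc] at hx
    exact (hf x (Set.Ioo_subset_Icc_self hx)).differentiableAt.differentiableWithinAt
  · intro x hx
    rw [interior_Icc] at hx
    rw [(hf x (Set.Ioo_subset_Icc_self hx)).deriv]
    exact h0 x hx

lemma antiOn_of_hasDerivAt {f f' : ℝ → ℝ} {a b : ℝ}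
    (hf : ∀ x ∈ Set.Icc a b, HasDerivAt f (f' x) x)
    (h0 : ∀ x ∈ Set.Ioo a b, f' x ≤ 0) : AntitoneOn f (Set.Icc a b) := by
  apply antitoneOn_of_deriv_nonpos (convex_Icc a b)
  · exact fun x hx => (hf x hx).continuousAt.continuousWithinAt
  · intro x hx
    rw [interior_Icc] at hx
    exact (hf x (Set.Ioo_subset_Icc_self hx)).differentiableAt.differentiableWithinAt
  · intro x hx
    rw [interior_Icc] at hx
    rw [(hf x (Set.Ioo_subset_Icc_self hx)).deriv]
    exact h0 x hx

lemma hasDerivAt_rpow_aux (c e : ℝ) {t : ℝ} (ht : t ≠ 0) :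
    HasDerivAt (fun t : ℝ => c * t ^ e) (c * e * t ^ (e - 1)) t := by
  have := (Real.hasDerivAt_rpow_const (p := e) (Or.inl ht)).const_mul c
  exact this.congr_deriv (by ring)

noncomputable def Ent (γ y x : ℝ) : ℝ :=
  x ^ γ / (γ - 1) - y ^ γ / (γ - 1) - γ * y ^ (γ - 1) / (γ - 1) * (x - y)

lemma ent_self (γ y : ℝ) : Ent γ y y = 0 := by simp [Ent]

lemma ent_hasDerivAt {γ : ℝ} (hγ : 1 ≤ γ) (y x : ℝ) :
    HasDerivAt (fun x => Ent γ y x)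
      (γ * x ^ (γ - 1) / (γ - 1) - γ * y ^ (γ - 1) / (γ - 1)) x := by
  have h1 : HasDerivAt (fun x : ℝ => x ^ γ) (γ * x ^ (γ - 1)) x :=
    Real.hasDerivAt_rpow_const (Or.inr hγ)
  have h2 : HasDerivAt (fun x : ℝ => γ * y ^ (γ - 1) / (γ - 1) * (x - y))
      (γ * y ^ (γ - 1) / (γ - 1)) x := by
    simpa using ((hasDerivAt_id x).sub_const y).const_mul (γ * y ^ (γ - 1) / (γ - 1))
  have := ((h1.div_const (γ - 1)).sub_const (y ^ γ / (γ - 1))).sub h2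
  exact this

lemma ent_hasDerivAt_y {γ : ℝ} (hγ : 1 < γ) (x : ℝ) {y : ℝ} (hy : y ≠ 0) :
    HasDerivAt (fun y => Ent γ y x) (-(γ * y ^ (γ - 2) * (x - y))) y := by
  have hγ1 : γ - 1 ≠ 0 := by intro h; linarith [sub_eq_zero.mp h]
  have h2 : HasDerivAt (fun y : ℝ => y ^ γ / (γ - 1)) (γ * y ^ (γ - 1) / (γ - 1)) y :=
    (Real.hasDerivAt_rpow_const (Or.inr hγ.le)).div_const (γ - 1)
  have h3 : HasDerivAt (fun y : ℝ => γ * y ^ (γ - 1) / (γ - 1))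
      (γ * (γ - 1) * y ^ (γ - 2) / (γ - 1)) y := by
    have := (hasDerivAt_rpow_aux γ (γ - 1) hy).div_const (γ - 1)
    have he : γ - 1 - 1 = γ - 2 := by ring
    rw [he] at this
    exact this
  have h5 : HasDerivAt (fun y : ℝ => x - y) (-1) y := by
    simpa using (hasDerivAt_id y).const_sub x
  have := ((hasDerivAt_const y (x ^ γ / (γ - 1))).sub h2).sub (h3.mul h5)
  exact this.congr_deriv (by field_simp; ring)

lemma ent_half {γ : ℝ} (hγ : 1 < γ) {x : ℝ} (hx : 0 < x) :
    Ent γ (x / 2) x = (2 ^ γ - 1 - γ) / ((γ - 1) * 2 ^ γ) * x ^ γ := by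
  have hγ1 : γ - 1 ≠ 0 := by intro h; linarith [sub_eq_zero.mp h]
  have h2γ : (0:ℝ) < 2 ^ γ := Real.rpow_pos_of_pos two_pos γ
  have e1 : (x / 2) ^ γ = x ^ γ / 2 ^ γ := Real.div_rpow hx.le (by norm_num : (0:ℝ) ≤ 2) _
  have e2 : (x / 2) ^ (γ - 1) = x ^ (γ - 1) / 2 ^ (γ - 1) := Real.div_rpow hx.le (by norm_num : (0:ℝ) ≤ 2) _
  have e3 : x ^ (γ - 1) = x ^ γ / x := by
    rw [Real.rpow_sub hx, Real.rpow_one]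
  have e4 : (2:ℝ) ^ (γ - 1) = 2 ^ γ / 2 := by
    rw [Real.rpow_sub two_pos, Real.rpow_one]
  unfold Ent
  rw [e1, e2, e3, e4]
  field_simp
  ring

lemma rpow_min_le {u T e x : ℝ} (hu : 0 < u) (hx : x ∈ Set.Icc u T) :
    min (u ^ e) (T ^ e) ≤ x ^ e := by
  rcases le_total 0 e with he | he
  · exact le_trans (min_le_left _ _) (Real.rpow_le_rpow hu.le hx.1 he)
  · exact le_trans (min_le_right _ _)
      (Real.rpow_le_rpow_of_nonpos (hu.trans_le hx.1) hx.2 he)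

lemma rpow_le_max {u T e x : ℝ} (hu : 0 < u) (hx : x ∈ Set.Icc u T) :
    x ^ e ≤ max (u ^ e) (T ^ e) := by
  rcases le_total 0 e with he | he
  · exact le_trans (Real.rpow_le_rpow (hu.le.trans hx.1) hx.2 he) (le_max_right _ _)
  · exact le_trans (Real.rpow_le_rpow_of_nonpos hu hx.1 he) (le_max_left _ _)

lemma ent_quad {γ u T m : ℝ} (hγ : 1 < γ) (hu : 0 < u)
    (hm : ∀ t ∈ Set.Icc u T, m ≤ γ * t ^ (γ - 2))
    {y : ℝ} (hy : y ∈ Set.Icc u T) :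
    ∀ x ∈ Set.Icc u T, m / 2 * (x - y) ^ 2 ≤ Ent γ y x := by
  have hγ1 : (0:ℝ) < γ - 1 := by linarith
  set ψ : ℝ → ℝ := fun t => γ * t ^ (γ - 1) / (γ - 1) - m * t with hψdef
  have hψd : ∀ t ∈ Set.Icc u T, HasDerivAt ψ (γ * t ^ (γ - 2) - m) t := by
    intro t ht
    have h1 := (hasDerivAt_rpow_aux γ (γ - 1) (ne_of_gt (hu.trans_le ht.1))).div_const (γ - 1)
    have he : γ - 1 - 1 = γ - 2 := by ring
    rw [he] at h1
    have h2 : HasDerivAt (fun t : ℝ => m * t) m t := by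
      simpa using (hasDerivAt_id t).const_mul m
    have := h1.sub h2
    exact this.congr_deriv (by field_simp)
  have hψ : MonotoneOn ψ (Set.Icc u T) := by
    apply monoOn_of_hasDerivAt hψd
    intro t ht
    exact sub_nonneg.2 (hm t (Set.Ioo_subset_Icc_self ht))
  intro x hx
  set φ : ℝ → ℝ := fun x => Ent γ y x - m / 2 * (x - y) ^ 2 with hφdef
  have hφd : ∀ x : ℝ, HasDerivAt φ
      ((γ * x ^ (γ - 1) / (γ - 1) - γ * y ^ (γ - 1) / (γ - 1)) - m * (x - y)) x := by
    intro x
    have h1 := ent_hasDerivAt hγ.le y x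
    have h2 : HasDerivAt (fun x : ℝ => m / 2 * (x - y) ^ 2) (m * (x - y)) x := by
      have := (((hasDerivAt_id x).sub_const y).pow 2).const_mul (m / 2)
      exact this.congr_deriv (by simp; ring)
    exact h1.sub h2
  have hφy : φ y = 0 := by simp [hφdef, ent_self]
  have key : 0 ≤ φ x := by
    rcases le_total x y with hxy | hxy
    · have hA : AntitoneOn φ (Set.Icc u y) := by
        apply antiOn_of_hasDerivAt (fun t _ => hφd t)
        intro t ht
        have ht' : t ∈ Set.Icc u T := ⟨ht.1.le, ht.2.le.trans hy.2⟩
        have := hψ ht' hy ht.2.le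
        simp only [hψdef] at this
        nlinarith [this]
      have h1 : x ∈ Set.Icc u y := ⟨hx.1, hxy⟩
      have h2 : y ∈ Set.Icc u y := ⟨hy.1, le_refl y⟩
      have := hA h1 h2 hxy
      rw [hφy] at this
      exact this
    · have hA : MonotoneOn φ (Set.Icc y T) := by
        apply monoOn_of_hasDerivAt (fun t _ => hφd t)
        intro t ht
        have ht' : t ∈ Set.Icc u T := ⟨hy.1.trans ht.1.le, ht.2.le⟩
        have := hψ hy ht' ht.1.le
        simp only [hψdef] at this
        nlinarith [this]
      have h1 : x ∈ Set.Icc y T := ⟨hxy, hx.2⟩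
      have h2 : y ∈ Set.Icc y T := ⟨le_refl y, hy.2⟩
      have := hA h2 h1 hxy
      rw [hφy] at this
      exact this
  simp only [hφdef] at key
  linarith

lemma ent_nonneg {γ : ℝ} (hγ : 1 < γ) {y x : ℝ} (hy : 0 < y) (hx : 0 ≤ x) :
    0 ≤ Ent γ y x := by
  have hγ1 : (0:ℝ) < γ - 1 := by linarith
  rcases le_total x y with hxy | hxy
  · have hA : AntitoneOn (fun x => Ent γ y x) (Set.Icc 0 y) := by
      apply antiOn_of_hasDerivAt (fun t _ => ent_hasDerivAt hγ.le y t)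
      intro t ht
      have h1 : t ^ (γ - 1) ≤ y ^ (γ - 1) := Real.rpow_le_rpow ht.1.le ht.2.le hγ1.le
      have : γ * t ^ (γ - 1) / (γ - 1) ≤ γ * y ^ (γ - 1) / (γ - 1) := by
        gcongr
      linarith
    have := hA (⟨hx, hxy⟩ : x ∈ Set.Icc 0 y) ⟨hy.le, le_refl y⟩ hxy
    simpa [ent_self] using this
  · have hA : MonotoneOn (fun x => Ent γ y x) (Set.Icc y x) := by
      apply monoOn_of_hasDerivAt (fun t _ => ent_hasDerivAt hγ.le y t)
      intro t ht
      have h1 : y ^ (γ - 1) ≤ t ^ (γ - 1) := Real.rpow_le_rpow hy.le ht.1.le hγ1.le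
      have : γ * y ^ (γ - 1) / (γ - 1) ≤ γ * t ^ (γ - 1) / (γ - 1) := by
        gcongr
      linarith
    have := hA ⟨le_refl y, hxy⟩ ⟨hxy, le_refl x⟩ hxy
    simpa [ent_self] using this

lemma rpow_lip {α u T L : ℝ} (hu : 0 < u)
    (hL : ∀ t ∈ Set.Icc u T, α * t ^ (α - 1) ≤ L)
    {x y : ℝ} (hx : x ∈ Set.Icc u T) (hy : y ∈ Set.Icc u T) (hyx : y ≤ x) :
    x ^ α - y ^ α ≤ L * (x - y) := by
  set χ : ℝ → ℝ := fun t => L * t - t ^ α with hχdef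
  have hχ : MonotoneOn χ (Set.Icc u T) := by
    apply monoOn_of_hasDerivAt (f' := fun t => L - α * t ^ (α - 1))
    · intro t ht
      have h1 : HasDerivAt (fun t : ℝ => t ^ α) (α * t ^ (α - 1)) t :=
        Real.hasDerivAt_rpow_const (Or.inl (ne_of_gt (hu.trans_le ht.1)))
      have h2 : HasDerivAt (fun t : ℝ => L * t) L t := by
        simpa using (hasDerivAt_id t).const_mul L
      exact h2.sub h1
    · intro t ht
      exact sub_nonneg.2 (hL t (Set.Ioo_subset_Icc_self ht))
  have := hχ hy hx hyx
  simp only [hχdef] at this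
  linarith

lemma core {γ α : ℝ} (hγ : 1 < γ) (hα : 0 ≤ α) (hαγ : 2 * α + 1 ≤ γ)
    {a b : ℝ} (ha : 0 < a) (hab : a ≤ b) :
    ∃ C > 0, ∀ ρ' ∈ Set.Icc a b, ∀ ρ : ℝ, 0 ≤ ρ →
      ρ * (ρ ^ α - ρ' ^ α) ^ 2 ≤ C * Ent γ ρ' ρ := by
  have hb : 0 < b := ha.trans_le hab
  set u : ℝ := a / 2 with hudef
  set T : ℝ := 2 * b with hTdef
  have hu : 0 < u := by positivity
  have hT : 0 < T := by positivity
  have huT : u ≤ T := by simp only [hudef, hTdef]; linarith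
  have hsub : Set.Icc a b ⊆ Set.Icc u T := by
    intro z hz
    constructor
    · simp only [hudef]; linarith [hz.1]
    · simp only [hTdef]; linarith [hz.2]
  -- quadratic constant
  set m : ℝ := γ * min (u ^ (γ - 2)) (T ^ (γ - 2)) with hmdef
  have hm0 : 0 < m := by
    have h1 := Real.rpow_pos_of_pos hu (γ - 2)
    have h2 := Real.rpow_pos_of_pos hT (γ - 2)
    have : 0 < min (u ^ (γ - 2)) (T ^ (γ - 2)) := lt_min h1 h2
    positivity
  have hm : ∀ t ∈ Set.Icc u T, m ≤ γ * t ^ (γ - 2) := by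
    intro t ht
    exact mul_le_mul_of_nonneg_left (rpow_min_le hu ht) (by linarith)
  -- Lipschitz constant
  set L : ℝ := α * max (u ^ (α - 1)) (T ^ (α - 1)) with hLdef
  have hL0 : 0 ≤ L := by
    have h1 := (Real.rpow_pos_of_pos hu (α - 1)).le
    have := le_max_left (u ^ (α - 1)) (T ^ (α - 1))
    have : (0:ℝ) ≤ max (u ^ (α - 1)) (T ^ (α - 1)) := le_trans h1 this
    positivity
  have hL : ∀ t ∈ Set.Icc u T, α * t ^ (α - 1) ≤ L :=
    fun t ht => mul_le_mul_of_nonneg_left (rpow_le_max hu ht) hα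
  -- region III constant
  set κ : ℝ := (2 ^ γ - 1 - γ) / ((γ - 1) * 2 ^ γ) with hκdef
  have hκ : 0 < κ := by
    have h := one_add_mul_self_lt_rpow_one_add (by norm_num : (-1:ℝ) ≤ 1) one_ne_zero hγ
    norm_num at h
    have h2γ : (0:ℝ) < 2 ^ γ := Real.rpow_pos_of_pos two_pos γ
    apply div_pos (by linarith)
    have : (0:ℝ) < γ - 1 := by linarith
    positivity
  set c₀ : ℝ := m / 2 * u ^ 2 with hc₀def
  have hc₀ : 0 < c₀ := by positivity
  set C₁ : ℝ := u * (b ^ α) ^ 2 / c₀ with hC₁def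
  set C₂ : ℝ := 2 * T * L ^ 2 / m with hC₂def
  set C₃ : ℝ := T ^ (2 * α + 1 - γ) / κ with hC₃def
  have hbα : 0 < b ^ α := Real.rpow_pos_of_pos hb α
  have hC₁0 : 0 ≤ C₁ := by positivity
  have hC₂0 : 0 ≤ C₂ := by positivity
  have hC₃0 : 0 ≤ C₃ := by
    have := (Real.rpow_pos_of_pos hT (2 * α + 1 - γ)).le
    positivity
  refine ⟨max 1 (max C₁ (max C₂ C₃)), lt_of_lt_of_le one_pos (le_max_left _ _), ?_⟩
  set C : ℝ := max 1 (max C₁ (max C₂ C₃)) with hCdef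
  have hC₁C : C₁ ≤ C := le_trans (le_max_left _ _) (le_max_right _ _)
  have hC₂C : C₂ ≤ C := le_trans (le_trans (le_max_left _ _) (le_max_right _ _)) (le_max_right _ _)
  have hC₃C : C₃ ≤ C := le_trans (le_trans (le_max_right _ _) (le_max_right _ _)) (le_max_right _ _)
  intro ρ' hρ' ρ hρ
  have hρ'0 : 0 < ρ' := ha.trans_le hρ'.1
  have hρ'uT : ρ' ∈ Set.Icc u T := hsub hρ'
  have hE0 : 0 ≤ Ent γ ρ' ρ := ent_nonneg hγ hρ'0 hρ
  have hquad := ent_quad hγ hu hm hρ'uT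
  rcases le_total ρ u with h1 | h1
  · -- Region I : ρ ∈ [0, u]
    have hEl : c₀ ≤ Ent γ ρ' ρ := by
      have step1 : Ent γ ρ' u ≤ Ent γ ρ' ρ := by
        have hA : AntitoneOn (fun x => Ent γ ρ' x) (Set.Icc 0 ρ') := by
          apply antiOn_of_hasDerivAt (fun t _ => ent_hasDerivAt hγ.le ρ' t)
          intro t ht
          have hh : t ^ (γ - 1) ≤ ρ' ^ (γ - 1) :=
            Real.rpow_le_rpow ht.1.le ht.2.le (by linarith)
          have : γ * t ^ (γ - 1) / (γ - 1) ≤ γ * ρ' ^ (γ - 1) / (γ - 1) := by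
            gcongr <;> linarith
          linarith
        have hu_mem : u ∈ Set.Icc 0 ρ' := ⟨hu.le, by linarith [hρ'.1]⟩
        have hρ_mem : ρ ∈ Set.Icc 0 ρ' := ⟨hρ, by linarith [hρ'.1]⟩
        exact hA hρ_mem hu_mem h1
      have step2 : c₀ ≤ Ent γ ρ' u := by
        have h := hquad u ⟨le_refl u, huT⟩
        have hdist : u ^ 2 ≤ (u - ρ') ^ 2 := by
          have h3 : u ≤ ρ' - u := by simp only [hudef]; linarith [hρ'.1]
          have h4 : u ^ 2 ≤ (ρ' - u) ^ 2 := pow_le_pow_left₀ hu.le h3 2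
          have h5 : (u - ρ') ^ 2 = (ρ' - u) ^ 2 := by ring
          linarith
        have : m / 2 * u ^ 2 ≤ m / 2 * (u - ρ') ^ 2 :=
          mul_le_mul_of_nonneg_left hdist (by linarith)
        simp only [hc₀def]
        linarith
      linarith
    have hLHS : ρ * (ρ ^ α - ρ' ^ α) ^ 2 ≤ u * (b ^ α) ^ 2 := by
      have hρα : ρ ^ α ≤ b ^ α := Real.rpow_le_rpow hρ (by linarith) hα
      have hρ'α : ρ' ^ α ≤ b ^ α := Real.rpow_le_rpow hρ'0.le hρ'.2 hα
      have h0ρ : 0 ≤ ρ ^ α := Real.rpow_nonneg hρ α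
      have h0ρ' : 0 ≤ ρ' ^ α := Real.rpow_nonneg hρ'0.le α
      have hsq : (ρ ^ α - ρ' ^ α) ^ 2 ≤ (b ^ α) ^ 2 :=
        sq_le_sq' (by linarith) (by linarith)
      exact mul_le_mul h1 hsq (by positivity) hu.le
    calc ρ * (ρ ^ α - ρ' ^ α) ^ 2 ≤ u * (b ^ α) ^ 2 := hLHS
      _ = C₁ * c₀ := by rw [hC₁def]; exact (div_mul_cancel₀ _ hc₀.ne').symm
      _ ≤ C₁ * Ent γ ρ' ρ := mul_le_mul_of_nonneg_left hEl hC₁0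
      _ ≤ C * Ent γ ρ' ρ := mul_le_mul_of_nonneg_right hC₁C hE0
  · rcases le_total ρ T with h2 | h2
    · -- Region II : ρ ∈ [u, T]
      have hρuT : ρ ∈ Set.Icc u T := ⟨h1, h2⟩
      have hEl : m / 2 * (ρ - ρ') ^ 2 ≤ Ent γ ρ' ρ := hquad ρ hρuT
      have hlip : (ρ ^ α - ρ' ^ α) ^ 2 ≤ L ^ 2 * (ρ - ρ') ^ 2 := by
        rcases le_total ρ' ρ with hc | hc
        · have h := rpow_lip hu hL hρuT hρ'uT hc
          have h0 : 0 ≤ ρ ^ α - ρ' ^ α :=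
            sub_nonneg.2 (Real.rpow_le_rpow hρ'0.le hc hα)
          calc (ρ ^ α - ρ' ^ α) ^ 2 ≤ (L * (ρ - ρ')) ^ 2 := pow_le_pow_left₀ h0 h 2
            _ = L ^ 2 * (ρ - ρ') ^ 2 := by rw [mul_pow]
        · have h := rpow_lip hu hL hρ'uT hρuT hc
          have h0 : 0 ≤ ρ' ^ α - ρ ^ α :=
            sub_nonneg.2 (Real.rpow_le_rpow hρ hc hα)
          calc (ρ ^ α - ρ' ^ α) ^ 2 = (ρ' ^ α - ρ ^ α) ^ 2 := by ring
            _ ≤ (L * (ρ' - ρ)) ^ 2 := pow_le_pow_left₀ h0 h 2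
            _ = L ^ 2 * (ρ - ρ') ^ 2 := by rw [mul_pow]; ring_nf
      have hLHS : ρ * (ρ ^ α - ρ' ^ α) ^ 2 ≤ T * (L ^ 2 * (ρ - ρ') ^ 2) :=
        mul_le_mul h2 hlip (by positivity) hT.le
      calc ρ * (ρ ^ α - ρ' ^ α) ^ 2 ≤ T * (L ^ 2 * (ρ - ρ') ^ 2) := hLHS
        _ = C₂ * (m / 2 * (ρ - ρ') ^ 2) := by rw [hC₂def]; field_simp
        _ ≤ C₂ * Ent γ ρ' ρ := mul_le_mul_of_nonneg_left hEl hC₂0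
        _ ≤ C * Ent γ ρ' ρ := mul_le_mul_of_nonneg_right hC₂C hE0
    · -- Region III : ρ ≥ T
      have hρpos : 0 < ρ := hT.trans_le h2
      have hρ'ρ2 : ρ' ≤ ρ / 2 := by
        have : ρ' ≤ b := hρ'.2
        simp only [hTdef] at h2
        linarith
      have step1 : Ent γ (ρ / 2) ρ ≤ Ent γ ρ' ρ := by
        have hA : AntitoneOn (fun y => Ent γ y ρ) (Set.Icc ρ' (ρ / 2)) := by
          apply antiOn_of_hasDerivAt
            (f' := fun y => -(γ * y ^ (γ - 2) * (ρ - y)))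
          · intro t ht
            exact ent_hasDerivAt_y hγ ρ (ne_of_gt (hρ'0.trans_le ht.1))
          · intro t ht
            have ht0 : 0 < t := hρ'0.trans ht.1
            have htρ : t ≤ ρ := by
              have := ht.2.le
              linarith
            have hn : (0:ℝ) ≤ γ * t ^ (γ - 2) := by
              have := Real.rpow_nonneg ht0.le (γ - 2)
              positivity
            have : 0 ≤ γ * t ^ (γ - 2) * (ρ - t) := mul_nonneg hn (by linarith)
            linarith
        exact hA ⟨le_refl ρ', hρ'ρ2⟩ ⟨hρ'ρ2, le_refl _⟩ hρ'ρ2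
      have step2 : Ent γ (ρ / 2) ρ = κ * ρ ^ γ := ent_half hγ hρpos
      have hEl : κ * ρ ^ γ ≤ Ent γ ρ' ρ := by rw [← step2]; exact step1
      have hργ : 0 < ρ ^ γ := Real.rpow_pos_of_pos hρpos γ
      have hLHS : ρ * (ρ ^ α - ρ' ^ α) ^ 2 ≤ T ^ (2 * α + 1 - γ) * ρ ^ γ := by
        have hαd : ρ' ^ α ≤ ρ ^ α :=
          Real.rpow_le_rpow hρ'0.le (le_trans (hρ'uT.2) h2) hα
        have h0ρ' : 0 ≤ ρ' ^ α := Real.rpow_nonneg hρ'0.le α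
        have h0ρα : 0 ≤ ρ ^ α := Real.rpow_nonneg hρ α
        have hsq : (ρ ^ α - ρ' ^ α) ^ 2 ≤ (ρ ^ α) ^ 2 :=
          sq_le_sq' (by linarith) (by linarith)
        have e1 : ρ * (ρ ^ α) ^ 2 = ρ ^ (2 * α + 1) := by
          rw [sq, ← Real.rpow_add hρpos]
          nth_rewrite 1 [← Real.rpow_one ρ]
          rw [← Real.rpow_add hρpos]
          congr 1
          ring
        have e2 : ρ ^ (2 * α + 1) = ρ ^ γ * ρ ^ (2 * α + 1 - γ) := by
          rw [← Real.rpow_add hρpos]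
          congr 1
          ring
        have e3 : ρ ^ (2 * α + 1 - γ) ≤ T ^ (2 * α + 1 - γ) :=
          Real.rpow_le_rpow_of_nonpos hT h2 (by linarith)
        calc ρ * (ρ ^ α - ρ' ^ α) ^ 2 ≤ ρ * (ρ ^ α) ^ 2 :=
              mul_le_mul_of_nonneg_left hsq hρpos.le
          _ = ρ ^ γ * ρ ^ (2 * α + 1 - γ) := by rw [e1, e2]
          _ ≤ ρ ^ γ * T ^ (2 * α + 1 - γ) := mul_le_mul_of_nonneg_left e3 hργ.le
          _ = T ^ (2 * α + 1 - γ) * ρ ^ γ := by ring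
      calc ρ * (ρ ^ α - ρ' ^ α) ^ 2 ≤ T ^ (2 * α + 1 - γ) * ρ ^ γ := hLHS
        _ = C₃ * (κ * ρ ^ γ) := by rw [hC₃def]; field_simp
        _ ≤ C₃ * Ent γ ρ' ρ := mul_le_mul_of_nonneg_left hEl hC₃0
        _ ≤ C * Ent γ ρ' ρ := mul_le_mul_of_nonneg_right hC₃C hE0

/-- (Lemma 35 of [Bresh]) Let `μ ρ = ρ^((s+3)/2)` with `γ ≥ s+2`, `s ≥ -1`, `γ > 1`,
and `h ρ = ρ^γ/(γ-1)`. For every compact `K ⊂ (0,∞)` there is `C > 0` such that for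
all `ρ̄ ∈ K` and `ρ ≥ 0`, `ρ |μ'(ρ) - μ'(ρ̄)|² ≤ C h(ρ|ρ̄)`. -/
theorem weighted_distance_bound (γ s : ℝ) (hγ : 1 < γ) (hs : -1 ≤ s) (hγs : s + 2 ≤ γ)
    (K : Set ℝ) (hK : IsCompact K) (hKpos : K ⊆ Set.Ioi 0) :
    ∃ C > 0, ∀ ρ' ∈ K, ∀ ρ : ℝ, 0 ≤ ρ →
      ρ * (deriv (fun x : ℝ => x ^ ((s + 3) / 2)) ρ
            - deriv (fun x : ℝ => x ^ ((s + 3) / 2)) ρ') ^ 2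
        ≤ C * (ρ ^ γ / (γ - 1) - ρ' ^ γ / (γ - 1)
            - deriv (fun x : ℝ => x ^ γ / (γ - 1)) ρ' * (ρ - ρ')) := by
  rcases K.eq_empty_or_nonempty with rfl | hne
  · exact ⟨1, one_pos, fun ρ' h => absurd h (Set.notMem_empty ρ')⟩
  obtain ⟨a, haK, halb⟩ := hK.exists_isLeast hne
  obtain ⟨b, hbK, hbub⟩ := hK.exists_isGreatest hne
  have ha0 : 0 < a := hKpos haK
  have hab : a ≤ b := hbub haK
  have hKsub : K ⊆ Set.Icc a b := fun z hz => ⟨halb hz, hbub hz⟩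
  have hα : 0 ≤ (s + 1) / 2 := by linarith
  have hαγ : 2 * ((s + 1) / 2) + 1 ≤ γ := by linarith
  obtain ⟨C, hC, hbound⟩ := core hγ hα hαγ ha0 hab
  have hp : 1 ≤ (s + 3) / 2 := by linarith
  have hp0 : (0:ℝ) < (s + 3) / 2 := by linarith
  refine ⟨((s + 3) / 2) ^ 2 * C, mul_pos (pow_pos hp0 2) hC, ?_⟩
  intro ρ' hρ'K ρ hρ
  have hρ'0 : 0 < ρ' := hKpos hρ'K
  have d1 : deriv (fun x : ℝ => x ^ ((s + 3) / 2)) ρ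
      = (s + 3) / 2 * ρ ^ ((s + 3) / 2 - 1) := Real.deriv_rpow_const _ _
  have d2 : deriv (fun x : ℝ => x ^ ((s + 3) / 2)) ρ'
      = (s + 3) / 2 * ρ' ^ ((s + 3) / 2 - 1) := Real.deriv_rpow_const _ _
  have d3 : deriv (fun x : ℝ => x ^ γ / (γ - 1)) ρ' = γ * ρ' ^ (γ - 1) / (γ - 1) :=
    ((Real.hasDerivAt_rpow_const (Or.inl hρ'0.ne')).div_const (γ - 1)).deriv
  have he : (s + 3) / 2 - 1 = (s + 1) / 2 := by ring
  rw [d1, d2, d3, he]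
  have key := hbound ρ' (hKsub hρ'K) ρ hρ
  calc ρ * ((s + 3) / 2 * ρ ^ ((s + 1) / 2) - (s + 3) / 2 * ρ' ^ ((s + 1) / 2)) ^ 2
      = ((s + 3) / 2) ^ 2 * (ρ * (ρ ^ ((s + 1) / 2) - ρ' ^ ((s + 1) / 2)) ^ 2) := by ring
    _ ≤ ((s + 3) / 2) ^ 2 * (C * Ent γ ρ' ρ) :=
        mul_le_mul_of_nonneg_left key (by positivity)
    _ = ((s + 3) / 2) ^ 2 * C * (ρ ^ γ / (γ - 1) - ρ' ^ γ / (γ - 1)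
          - γ * ρ' ^ (γ - 1) / (γ - 1) * (ρ - ρ')) := by
        simp only [Ent]
        ring
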